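/- Let L be a finite-dimensional Lie algebra over a field F of characteristic zero such that L = R ⊕ S (vector space direct sum) where R is the solvable radical and S is a direct sum of simple ideals, each of which is either minimal non-abelian (every proper subalgebra is abelian) or isomorphic to sl₂(F). Then every c-section of every maximal subalgebra of L is solvable. -/

import Mathlib

/-- `M` is a maximal (proper) subalgebra of `L`. -/
def IsMaximalSubalgebra {F : Type*} [Field F] {L : Type*} [LieRing L] [LieAlgebra F L]
    (M : LieSubalgebra F L) : Prop :=
  M ≠ ⊤ ∧ ∀ K : LieSubalgebra F L, M < K → K = ⊤

/-- `C/D` is a chief factor of `L`: `D < C` are ideals of `L` and there is no ideal of `L`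
strictly between them (equivalently, `C/D` is a minimal nonzero ideal of `L/D`). -/
def IsChiefFactor {F : Type*} [Field F] {L : Type*} [LieRing L] [LieAlgebra F L]
    (D C : LieIdeal F L) : Prop :=
  D < C ∧ ∀ K : LieIdeal F L, D ≤ K → K ≤ C → K = D ∨ K = C

/-- The subquotient `S/(S ∩ D)`, as a Lie algebra; when `D ⊆ S` this is `S/D`. -/
abbrev SubQuot {F : Type*} [Field F] {L : Type*} [LieRing L] [LieAlgebra F L]
    (S : LieSubalgebra F L) (D : LieIdeal F L) :=
  S ⧸ LieIdeal.comap S.incl D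

/-- The core `M_L` of a subalgebra `M`: the largest ideal of `L` contained in `M`. -/
def coreOf {F : Type*} [Field F] {L : Type*} [LieRing L] [LieAlgebra F L]
    (M : LieSubalgebra F L) : LieIdeal F L :=
  sSup {I : LieIdeal F L | (I : Set L) ⊆ M}


section Aux

variable {F : Type*} [Field F]

/-- Any Lie algebra of dimension at most two is solvable. -/
lemma lieSolvable_of_finrank_le_two {A : Type*} [LieRing A] [LieAlgebra F A]
    [FiniteDimensional F A] (h : Module.finrank F A ≤ 2) : LieAlgebra.IsSolvable A := by
  -- find a single vector spanning all brackets
  obtain ⟨v, hv⟩ : ∃ v : A, ∀ x y : A, ⁅x, y⁆ ∈ Submodule.span F {v} := by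
    interval_cases h' : Module.finrank F A
    · have : Subsingleton A := Module.finrank_zero_iff.mp h'
      exact ⟨0, fun x y => by rw [Subsingleton.elim ⁅x,y⁆ 0]; exact Submodule.zero_mem _⟩
    · have b := Module.finBasisOfFinrankEq F A h'
      refine ⟨0, fun x y => ?_⟩
      have hx := b.sum_repr x
      have hy := b.sum_repr y
      rw [Fin.sum_univ_one] at hx hy
      rw [← hx, ← hy, smul_lie, lie_smul, lie_self, smul_zero, smul_zero]
      exact Submodule.zero_mem _
    · have b := Module.finBasisOfFinrankEq F A h'
      refine ⟨⁅b 0, b 1⁆, fun x y => ?_⟩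
      have hx := b.sum_repr x
      have hy := b.sum_repr y
      rw [Fin.sum_univ_two] at hx hy
      rw [← hx, ← hy]
      have hskew : ⁅b 1, b 0⁆ = -⁅b 0, b 1⁆ := by rw [← lie_skew]
      simp only [add_lie, lie_add, smul_lie, lie_smul, lie_self, smul_zero, add_zero, zero_add,
        hskew, smul_neg]
      rw [Submodule.mem_span_singleton]
      exact ⟨b.repr x 0 * b.repr y 1 - b.repr x 1 * b.repr y 0, by module⟩
  have hd1 : ∀ z ∈ LieAlgebra.derivedSeries F A 1, z ∈ Submodule.span F {v} := by
    intro z hz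
    rw [LieAlgebra.derivedSeries_def, LieAlgebra.derivedSeriesOfIdeal_succ,
      LieAlgebra.derivedSeriesOfIdeal_zero] at hz
    rw [← LieSubmodule.mem_toSubmodule, LieSubmodule.lieIdeal_oper_eq_linear_span'] at hz
    refine Submodule.span_le.mpr ?_ hz
    rintro w ⟨x, -, y, -, rfl⟩
    exact hv x y
  refine LieAlgebra.IsSolvable.mk (R := F) (k := 2) ?_
  have : LieAlgebra.derivedSeries F A 2 = ⁅LieAlgebra.derivedSeries F A 1,
      LieAlgebra.derivedSeries F A 1⁆ := rfl
  rw [this, LieSubmodule.lie_eq_bot_iff]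
  intro x hx y hy
  obtain ⟨s, rfl⟩ := Submodule.mem_span_singleton.mp (hd1 x hx)
  obtain ⟨t, rfl⟩ := Submodule.mem_span_singleton.mp (hd1 y hy)
  rw [smul_lie, lie_smul, lie_self, smul_zero, smul_zero]

/-- In a Lie algebra of dimension at most three, every proper subalgebra is solvable. -/
lemma solvable_of_ne_top_of_finrank_le_three {A : Type*} [LieRing A] [LieAlgebra F A]
    [FiniteDimensional F A] (h3 : Module.finrank F A ≤ 3)
    (U : LieSubalgebra F A) (hU : U ≠ ⊤) : LieAlgebra.IsSolvable U := by
  haveI : FiniteDimensional F U := inferInstanceAs (FiniteDimensional F U.toSubmodule)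
  have hlt : U.toSubmodule < ⊤ := by
    rcases lt_or_eq_of_le (le_top : U.toSubmodule ≤ ⊤) with h | h
    · exact h
    · exfalso; apply hU
      rw [← LieSubalgebra.toSubmodule_inj, h, LieSubalgebra.top_toSubmodule]
  have h2 : Module.finrank F U ≤ 2 := by
    have h1 := Submodule.finrank_lt (K := F) (V := A) hlt.ne
    have h2 : Module.finrank F U = Module.finrank F U.toSubmodule := rfl
    omega
  exact lieSolvable_of_finrank_le_two h2

lemma finrank_sl2 [CharZero F] :
    Module.finrank F (LieAlgebra.SpecialLinear.sl (Fin 2) F) = 3 := by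
  have hsurj : Function.Surjective (Matrix.traceLinearMap (Fin 2) F F) := by
    intro c
    refine ⟨(c / 2) • (1 : Matrix (Fin 2) (Fin 2) F), ?_⟩
    have : Matrix.trace (1 : Matrix (Fin 2) (Fin 2) F) = (2 : F) := by
      rw [Matrix.trace_one]; norm_num
    simp only [Matrix.traceLinearMap_apply, Matrix.trace_smul, this, smul_eq_mul]
    field_simp
  have hrn := LinearMap.finrank_range_add_finrank_ker (Matrix.traceLinearMap (Fin 2) F F)
  rw [LinearMap.range_eq_top.mpr hsurj, finrank_top, Module.finrank_self] at hrn
  have h4 : Module.finrank F (Matrix (Fin 2) (Fin 2) F) = 4 := by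
    simp [Module.finrank_matrix]
  rw [h4] at hrn
  have : Module.finrank F (LieAlgebra.SpecialLinear.sl (Fin 2) F)
      = Module.finrank F (LinearMap.ker (Matrix.traceLinearMap (Fin 2) F F)) := rfl
  omega

/-- An ideal of the ambient algebra contained in an ideal that is simple as a Lie algebra
is trivial or everything. -/
lemma eq_bot_or_eq_of_le_simple {A : Type*} [LieRing A] [LieAlgebra F A]
    (Ji : LieIdeal F A) (hs : LieAlgebra.IsSimple F Ji)
    (I : LieIdeal F A) (h : I ≤ Ji) : I = ⊥ ∨ I = Ji := by
  have := hs.eq_bot_or_eq_top (LieIdeal.comap Ji.incl I)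
  rcases this with hbot | htop
  · left
    rw [eq_bot_iff]
    intro x hx
    have hxJ : x ∈ Ji := h hx
    have : (⟨x, hxJ⟩ : Ji) ∈ LieIdeal.comap Ji.incl I := by
      rw [LieIdeal.mem_comap]; exact hx
    rw [hbot, LieSubmodule.mem_bot] at this
    simpa [LieSubmodule.mem_bot] using congrArg Subtype.val this
  · right
    refine le_antisymm h ?_
    intro x hx
    have : (⟨x, hx⟩ : Ji) ∈ LieIdeal.comap Ji.incl I := htop ▸ LieSubmodule.mem_top _
    rwa [LieIdeal.mem_comap] at this

/-- The linear projection onto a subalgebra along a complementary ideal is a morphism of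
Lie algebras. -/
noncomputable def projLieHom {A : Type*} [LieRing A] [LieAlgebra F A] (B : LieSubalgebra F A)
    (T : LieIdeal F A) (hc : IsCompl B.toSubmodule T.toSubmodule) : A →ₗ⁅F⁆ B where
  toLinearMap := Submodule.linearProjOfIsCompl B.toSubmodule T.toSubmodule hc
  map_lie' := by
    intro x y
    let π : A →ₗ[F] B := Submodule.linearProjOfIsCompl B.toSubmodule T.toSubmodule hc
    show π ⁅x, y⁆ = ⁅π x, π y⁆
    have hleft : ∀ u : B, π ↑u = u := fun u => Submodule.linearProjOfIsCompl_apply_left hc u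
    have hzero : ∀ z : A, π z = 0 ↔ z ∈ T := fun z =>
      Submodule.linearProjOfIsCompl_apply_eq_zero_iff hc
    have hker : ∀ z : A, z - ↑(π z) ∈ T := by
      intro z
      have h0 : π (z - ↑(π z)) = 0 := by
        rw [map_sub, hleft (π z), sub_self]
      exact (hzero _).mp h0
    have key : ⁅x, y⁆ - ↑(⁅π x, π y⁆ : B) ∈ T := by
      have hcoe : (↑(⁅π x, π y⁆ : B) : A) = ⁅(↑(π x) : A), ↑(π y)⁆ := rfl
      have h1 : ⁅x - ↑(π x), y⁆ ∈ T := lie_mem_left F A T _ y (hker x)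
      have h2 : ⁅(↑(π x) : A), y - ↑(π y)⁆ ∈ T := lie_mem_right F A T _ _ (hker y)
      have : ⁅x, y⁆ - ↑(⁅π x, π y⁆ : B) = ⁅x - ↑(π x), y⁆ + ⁅(↑(π x) : A), y - ↑(π y)⁆ := by
        rw [hcoe, sub_lie, lie_sub]; abel
      rw [this]
      exact add_mem h1 h2
    have h3 : π ⁅x, y⁆ - π ↑(⁅π x, π y⁆ : B) = 0 := by
      rw [← map_sub]
      exact (hzero _).mpr key
    rw [hleft ⁅π x, π y⁆] at h3
    exact sub_eq_zero.mp h3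

@[simp] lemma projLieHom_apply {A : Type*} [LieRing A] [LieAlgebra F A] (B : LieSubalgebra F A)
    (T : LieIdeal F A) (hc : IsCompl B.toSubmodule T.toSubmodule) (x : A) :
    projLieHom B T hc x = Submodule.linearProjOfIsCompl B.toSubmodule T.toSubmodule hc x := rfl

end Aux

section Decomp

variable {F : Type*} [Field F] {A : Type*} [LieRing A] [LieAlgebra F A]
variable {n : ℕ} {J : Fin n → LieIdeal F A}

private lemma lie_sum'' {ι : Type*} (y : A) (s : Finset ι) (f : ι → A) :
    ⁅y, ∑ i ∈ s, f i⁆ = ∑ i ∈ s, ⁅y, f i⁆ :=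
  map_sum (AddMonoidHom.mk' (fun m => ⁅y, m⁆) (lie_add y)) f s

/-- An ideal of the ambient algebra contained in an ideal that is simple as a Lie algebra
is trivial or everything. -/
lemma eq_bot_or_eq_of_le_simple' (Ji : LieIdeal F A) (hs : LieAlgebra.IsSimple F Ji)
    (I : LieIdeal F A) (h : I ≤ Ji) : I = ⊥ ∨ I = Ji := by
  have := hs.eq_bot_or_eq_top (LieIdeal.comap Ji.incl I)
  rcases this with hbot | htop
  · left
    rw [eq_bot_iff]
    intro x hx
    have hxJ : x ∈ Ji := h hx
    have : (⟨x, hxJ⟩ : Ji) ∈ LieIdeal.comap Ji.incl I := by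
      rw [LieIdeal.mem_comap]; exact hx
    rw [hbot, LieSubmodule.mem_bot] at this
    simpa [LieSubmodule.mem_bot] using congrArg Subtype.val this
  · right
    refine le_antisymm h ?_
    intro x hx
    have : (⟨x, hx⟩ : Ji) ∈ LieIdeal.comap Ji.incl I := htop ▸ LieSubmodule.mem_top _
    rwa [LieIdeal.mem_comap] at this

lemma center_elt_eq_zero_of_decomp (hind : iSupIndep J) (hJsup : (⨆ i, J i) = ⊤)
    (hsimple : ∀ i, LieAlgebra.IsSimple F (J i)) (z : A) (hz : ∀ s : A, ⁅z, s⁆ = 0) :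
    z = 0 := by
  have hzmem : z ∈ ⨆ i, ((J i).toSubmodule) := by
    rw [← LieSubmodule.iSup_toSubmodule]
    rw [hJsup]
    exact LieSubmodule.mem_top z
  rw [Submodule.mem_iSup_iff_exists_finsupp] at hzmem
  obtain ⟨f, hf, hsum⟩ := hzmem
  have hz0 : ∀ i, f i = 0 := by
    intro i
    have hfi : ∀ y ∈ J i, ⁅y, f i⁆ = 0 := by
      intro y hy
      have h0 : ⁅y, z⁆ = 0 := by rw [← lie_skew, hz y, neg_zero]
      rw [← hsum, Finsupp.sum_fintype _ _ (fun _ => rfl), lie_sum''] at h0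
      rw [Finset.sum_eq_single i] at h0
      · exact h0
      · intro j _ hji
        have h1 : ⁅y, f j⁆ ∈ J i := lie_mem_left F A (J i) y (f j) hy
        have h2 : ⁅y, f j⁆ ∈ J j := lie_mem_right F A (J j) y (f j) (hf j)
        have hd : Disjoint (J i) (J j) := hind.pairwiseDisjoint (Ne.symm hji)
        have : ⁅y, f j⁆ ∈ (⊥ : LieIdeal F A) :=
          hd.le_bot (by rw [LieSubmodule.mem_inf]; exact ⟨h1, h2⟩)
        rwa [LieSubmodule.mem_bot] at this
      · intro hi; exact absurd (Finset.mem_univ i) hi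
    -- the element `f i` is central in the simple algebra `J i`
    haveI := hsimple i
    set u : (J i) := ⟨f i, hf i⟩ with hu
    have hcen : u ∈ LieAlgebra.center F (J i) := by
      rw [LieModule.mem_maxTrivSubmodule]
      intro v
      ext
      change ⁅(v : A), (u : A)⁆ = (0 : A)
      exact hfi v v.2
    rw [LieAlgebra.center_eq_bot, LieSubmodule.mem_bot] at hcen
    have := congrArg Subtype.val hcen
    simpa [hu] using this
  rw [← hsum, Finsupp.sum_fintype _ _ (fun _ => rfl)]
  simp [hz0]

lemma ideal_le_iSup_of_decomp (hind : iSupIndep J) (hJsup : (⨆ i, J i) = ⊤)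
    (hsimple : ∀ i, LieAlgebra.IsSimple F (J i)) (I : LieIdeal F A) :
    I ≤ ⨆ i : {i // J i ≤ I}, J i.val := by
  set W : LieIdeal F A := ⨆ i : {i // J i ≤ I}, J i.val with hW
  set B : LieIdeal F A := ⨆ i : {i // ¬ J i ≤ I}, J i.val with hB
  have hWI : W ≤ I := iSup_le fun i => i.2
  have htop : W ⊔ B = ⊤ := by
    refine le_antisymm le_top ?_
    rw [← hJsup]
    refine iSup_le fun i => ?_
    by_cases h : J i ≤ I
    · exact le_trans (le_iSup (fun i : {i // J i ≤ I} => J i.val) ⟨i, h⟩) le_sup_left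
    · exact le_trans (le_iSup (fun i : {i // ¬ J i ≤ I} => J i.val) ⟨i, h⟩) le_sup_right
  intro x hx
  have hx2 : x ∈ W ⊔ B := htop ▸ LieSubmodule.mem_top x
  obtain ⟨w, hw, b, hb, hwb⟩ := (LieSubmodule.mem_sup W B x).mp hx2
  have hbI : b ∈ I := by
    have hbxw : b = x - w := by rw [← hwb]; abel
    rw [hbxw]
    exact sub_mem hx (hWI hw)
  have hbz : ∀ s : A, ⁅b, s⁆ = 0 := by
    intro s
    have hs : s ∈ ⨆ i, ((J i).toSubmodule) := by
      rw [← LieSubmodule.iSup_toSubmodule, hJsup]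
      exact LieSubmodule.mem_top s
    refine Submodule.iSup_induction _ (motive := fun s => ⁅b, s⁆ = 0) hs ?_ (lie_zero b) ?_
    · intro i s hsi
      by_cases hi : J i ≤ I
      · -- induct on `b` over `B`
        have hbB : b ∈ ⨆ j : {j // ¬ J j ≤ I}, ((J j.val).toSubmodule) := by
          rw [← LieSubmodule.iSup_toSubmodule]
          exact hb
        refine Submodule.iSup_induction _ (motive := fun b' => ⁅b', s⁆ = 0) hbB ?_ (zero_lie s) ?_
        · intro j b' hb'
          have hne : i ≠ j.val := by
            intro hij
            exact j.2 (hij ▸ hi)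
          have h1 : ⁅b', s⁆ ∈ J j.val := lie_mem_left F A (J j.val) b' s hb'
          have h2 : ⁅b', s⁆ ∈ J i := lie_mem_right F A (J i) b' s hsi
          have hd : Disjoint (J j.val) (J i) := hind.pairwiseDisjoint (fun h => hne h.symm)
          have : ⁅b', s⁆ ∈ (⊥ : LieIdeal F A) :=
            hd.le_bot (by rw [LieSubmodule.mem_inf]; exact ⟨h1, h2⟩)
          rwa [LieSubmodule.mem_bot] at this
        · intro y z hy hz
          rw [add_lie, hy, hz, add_zero]
      · rcases eq_bot_or_eq_of_le_simple' (J i) (hsimple i) (I ⊓ J i) inf_le_right with hh | hh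
        · have h1 : ⁅b, s⁆ ∈ I := lie_mem_left F A I b s hbI
          have h2 : ⁅b, s⁆ ∈ J i := lie_mem_right F A (J i) b s hsi
          have : ⁅b, s⁆ ∈ I ⊓ J i := by rw [LieSubmodule.mem_inf]; exact ⟨h1, h2⟩
          rw [hh, LieSubmodule.mem_bot] at this
          exact this
        · exact absurd (hh ▸ (inf_le_left : I ⊓ J i ≤ I)) hi
    · intro y z hy hz
      rw [lie_add, hy, hz, add_zero]
  have hb0 : b = 0 := center_elt_eq_zero_of_decomp hind hJsup hsimple b hbz
  rw [← hwb, hb0, add_zero]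
  exact hw

end Decomp

/-- Characteristic zero: if `L = R ∔ S` where `R` is the radical and `S` is a direct sum of
simple ideals, each minimal non-abelian or isomorphic to `sl₂(F)`, then every c-section of
every maximal subalgebra of `L` is solvable. -/
theorem cSections_solvable_of_structure {F : Type*} [Field F] [CharZero F]
    {L : Type*} [LieRing L] [LieAlgebra F L] [FiniteDimensional F L]
    (S : LieSubalgebra F L)
    (hsup : (LieAlgebra.radical F L).toSubmodule ⊔ S.toSubmodule = ⊤)
    (hinf : (LieAlgebra.radical F L).toSubmodule ⊓ S.toSubmodule = ⊥)
    (n : ℕ) (J : Fin n → LieIdeal F S)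
    (hind : iSupIndep J) (hJsup : (⨆ i, J i) = ⊤)
    (hsimple : ∀ i, LieAlgebra.IsSimple F (J i))
    (hprop : ∀ i, (∀ U : LieSubalgebra F (J i), U ≠ ⊤ → IsLieAbelian U) ∨
      Nonempty ((J i) ≃ₗ⁅F⁆ LieAlgebra.SpecialLinear.sl (Fin 2) F)) :
    ∀ M : LieSubalgebra F L, IsMaximalSubalgebra M →
      ∀ C D : LieIdeal F L, IsChiefFactor D C → (D : Set L) ⊆ (M : Set L) →
        M.toSubmodule ⊔ C.toSubmodule = ⊤ →
          LieAlgebra.IsSolvable (SubQuot (M ⊓ (C : LieSubalgebra F L)) D) := by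
  intro M hM C D hCD hDM hMC
  classical
  set N : LieSubalgebra F L := M ⊓ (C : LieSubalgebra F L) with hN
  have hNC : ∀ x : N, (x : L) ∈ C := by
    intro x
    have h := (LieSubalgebra.mem_inf _ _ _).mp x.2
    exact h.2
  have hNM : ∀ x : N, (x : L) ∈ M := by
    intro x
    exact ((LieSubalgebra.mem_inf _ _ _).mp x.2).1
  by_cases hab : ⁅C, C⁆ ≤ D
  · -- abelian chief factor: the c-section is abelian
    haveI : IsLieAbelian (SubQuot N D) := by
      constructor
      intro x y
      obtain ⟨a, rfl⟩ := LieSubmodule.Quotient.surjective_mk'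
        (N := LieIdeal.comap N.incl D) x
      obtain ⟨b, rfl⟩ := LieSubmodule.Quotient.surjective_mk'
        (N := LieIdeal.comap N.incl D) y
      have hmem : ⁅a, b⁆ ∈ LieIdeal.comap N.incl D := by
        rw [LieIdeal.mem_comap]
        have hco : N.incl ⁅a, b⁆ = ⁅(a : L), (b : L)⁆ := rfl
        rw [hco]
        exact hab (LieSubmodule.lie_mem_lie (hNC a) (hNC b))
      calc ⁅LieSubmodule.Quotient.mk' _ a, LieSubmodule.Quotient.mk' _ b⁆
          = LieSubmodule.Quotient.mk' _ ⁅a, b⁆ := by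
            exact (LieSubmodule.Quotient.mk_bracket _ _ _).symm
        _ = 0 := (LieSubmodule.Quotient.mk_eq_zero _).mpr hmem
    exact LieAlgebra.ofAbelianIsSolvable _
  · -- non-abelian chief factor
    -- Step 1 : C ⊓ radical ≤ D
    have hCR : C ⊓ LieAlgebra.radical F L ≤ D := by
      rcases hCD.2 ((C ⊓ LieAlgebra.radical F L) ⊔ D) le_sup_right
          (sup_le inf_le_left hCD.1.le) with hK | hK
      · exact le_trans le_sup_left hK.le
      · exfalso
        have hperf : ⁅C, C⁆ ⊔ D = C := by
          rcases hCD.2 (⁅C, C⁆ ⊔ D) le_sup_right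
              (sup_le ((LieSubmodule.lie_le_inf C C).trans inf_le_left) hCD.1.le) with h | h
          · exact absurd (le_trans le_sup_left h.le) hab
          · exact h
        have hsolv : LieAlgebra.IsSolvable ↥(C ⊓ LieAlgebra.radical F L) :=
          LieAlgebra.le_solvable_ideal_solvable inf_le_right (LieAlgebra.radicalIsSolvable F L)
        obtain ⟨k, hk⟩ := LieAlgebra.IsSolvable.solvable F ↥(C ⊓ LieAlgebra.radical F L)
        rw [LieIdeal.derivedSeries_eq_bot_iff] at hk
        have hstep : ∀ m, C ≤ LieAlgebra.derivedSeriesOfIdeal F L m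
            (C ⊓ LieAlgebra.radical F L) ⊔ D := by
          intro m
          induction m with
          | zero =>
            rw [LieAlgebra.derivedSeriesOfIdeal_zero]
            exact hK.ge
          | succ m ih =>
            set X := LieAlgebra.derivedSeriesOfIdeal F L m (C ⊓ LieAlgebra.radical F L) with hX
            have h1 : ⁅C, C⁆ ≤ ⁅X ⊔ D, X ⊔ D⁆ := LieSubmodule.mono_lie ih ih
            have h2 : ⁅X ⊔ D, (X ⊔ D : LieIdeal F L)⁆ ≤
                LieAlgebra.derivedSeriesOfIdeal F L (m + 1)
                  (C ⊓ LieAlgebra.radical F L) ⊔ D := by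
              rw [LieSubmodule.sup_lie, LieSubmodule.lie_sup, LieSubmodule.lie_sup]
              rw [LieAlgebra.derivedSeriesOfIdeal_succ]
              refine sup_le (sup_le le_sup_left ?_) (sup_le ?_ ?_)
              · exact le_trans (LieSubmodule.lie_le_right D X) le_sup_right
              · exact le_trans ((LieSubmodule.lie_le_inf D X).trans inf_le_left) le_sup_right
              · exact le_trans (LieSubmodule.lie_le_right D D) le_sup_right
            calc C = ⁅C, C⁆ ⊔ D := hperf.symm
              _ ≤ (LieAlgebra.derivedSeriesOfIdeal F L (m + 1)
                    (C ⊓ LieAlgebra.radical F L) ⊔ D) ⊔ D :=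
                  sup_le ((le_trans h1 h2).trans le_sup_left) le_sup_right
              _ = _ := by rw [sup_assoc, sup_idem]
        have := hstep k
        rw [hk, bot_sup_eq] at this
        exact hCD.1.not_ge this
    -- Step 2 : the projection onto S along the radical
    have hcompl : IsCompl S.toSubmodule (LieAlgebra.radical F L).toSubmodule :=
      ⟨disjoint_iff.mpr (by rw [inf_comm]; exact hinf),
       codisjoint_iff.mpr (by rw [sup_comm]; exact hsup)⟩
    set p : L →ₗ⁅F⁆ S := projLieHom S (LieAlgebra.radical F L) hcompl with hp
    have hpS : ∀ u : S, p ↑u = u := fun u =>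
      Submodule.linearProjOfIsCompl_apply_left hcompl u
    have hpsurj : Function.Surjective p := fun u => ⟨↑u, hpS u⟩
    have hpker : ∀ x : L, x - ↑(p x) ∈ LieAlgebra.radical F L := by
      intro x
      have h0 : p (x - ↑(p x)) = 0 := by
        rw [map_sub]
        have : p ((p x : L)) = p x := hpS (p x)
        rw [this, sub_self]
      exact (Submodule.linearProjOfIsCompl_apply_eq_zero_iff hcompl).mp h0
    set E : LieIdeal F S := LieIdeal.map p C with hE
    set E' : LieIdeal F S := LieIdeal.map p D with hE'
    have hCE : ∀ x ∈ C, p x ∈ E := fun x hx => LieIdeal.mem_map hx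
    have hpE' : ∀ x ∈ C, (p x ∈ E' ↔ x ∈ D) := by
      intro x hx
      constructor
      · intro hmem
        obtain ⟨d, hd⟩ := LieIdeal.mem_map_of_surjective hpsurj hmem
        have hrad : x - ↑d ∈ LieAlgebra.radical F L := by
          have h1 := hpker x
          have h2 := hpker ↑d
          have h3 : x - ↑d = (x - ↑(p x)) - ((d : L) - ↑(p ↑d)) := by
            rw [hd]; abel
          rw [h3]
          exact sub_mem h1 h2
        have hc : x - ↑d ∈ C := sub_mem hx (hCD.1.le d.2)
        have : x - ↑d ∈ C ⊓ LieAlgebra.radical F L := by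
          rw [LieSubmodule.mem_inf]; exact ⟨hc, hrad⟩
        have hxd : x - ↑d ∈ D := hCR this
        have : x = (x - ↑d) + ↑d := by abel
        rw [this]
        exact add_mem hxd d.2
      · intro hmem
        exact LieIdeal.mem_map hmem
    have hchiefS : ∀ K : LieIdeal F S, E' ≤ K → K ≤ E → K = E' ∨ K = E := by
      intro K hE'K hKE
      set Kt : LieIdeal F L := LieIdeal.comap p K ⊓ C with hKt
      have hmapK : LieIdeal.map p Kt = K := by
        refine le_antisymm (le_trans (LieIdeal.map_mono inf_le_left) LieIdeal.map_comap_le) ?_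
        intro y hy
        obtain ⟨c, hc⟩ := LieIdeal.mem_map_of_surjective hpsurj (hKE hy)
        have hcK : (c : L) ∈ Kt := by
          rw [LieSubmodule.mem_inf]
          refine ⟨?_, c.2⟩
          rw [LieIdeal.mem_comap, hc]
          exact hy
        have := LieIdeal.mem_map (f := p) hcK
        rwa [hc] at this
      have hDKt : D ≤ Kt := by
        refine le_inf (le_trans ?_ (LieIdeal.comap_mono hE'K)) hCD.1.le
        exact LieIdeal.comap_map_le
      rcases hCD.2 Kt hDKt inf_le_right with h | h
      · left; rw [← hmapK, h]
      · right; rw [← hmapK, h]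
    have hE'E : E' < E := by
      refine lt_of_le_of_ne (LieIdeal.map_mono hCD.1.le) ?_
      intro heq
      have hCle : C ≤ D := by
        intro x hx
        exact (hpE' x hx).mp (heq ▸ hCE x hx)
      exact hCD.1.not_ge hCle
    -- Step 3 : find the simple component
    have hex : ∃ i, J i ≤ E ∧ ¬ J i ≤ E' := by
      by_contra h
      push_neg at h
      have h2 : E ≤ E' := le_trans (ideal_le_iSup_of_decomp hind hJsup hsimple E)
        (iSup_le fun i => h i.val i.2)
      exact hE'E.not_ge h2
    obtain ⟨i₀, hi₀E, hi₀E'⟩ := hex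
    set T : LieIdeal F S := ⨆ j, ⨆ (_ : j ≠ i₀), J j with hT
    have hGT_bot : J i₀ ⊓ T = ⊥ := disjoint_iff.mp (hind i₀)
    have hGT_top : J i₀ ⊔ T = ⊤ := by
      rw [← hJsup]
      refine le_antisymm (sup_le (le_iSup J i₀)
        (iSup_le fun j => iSup_le fun _ => le_iSup J j)) (iSup_le fun j => ?_)
      by_cases hj : j = i₀
      · subst hj; exact le_sup_left
      · exact le_trans (le_iSup_of_le j (le_iSup (fun _ : j ≠ i₀ => J j) hj)) le_sup_right
    have hE'T : E' ≤ T := by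
      refine le_trans (ideal_le_iSup_of_decomp hind hJsup hsimple E') (iSup_le fun j => ?_)
      have hne : j.val ≠ i₀ := by
        intro h
        exact hi₀E' (h ▸ j.2)
      exact le_iSup_of_le j.val (le_iSup (fun _ : j.val ≠ i₀ => J j.val) hne)
    have hET : E ⊓ T = E' := by
      rcases hchiefS (E ⊓ T) (le_inf hE'E.le hE'T) inf_le_left with h | h
      · exact h
      · exfalso
        have h2 : J i₀ ≤ T := le_trans hi₀E (h.ge.trans inf_le_right)
        have h3 : J i₀ ≤ ⊥ := hGT_bot ▸ le_inf le_rfl h2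
        exact hi₀E' (h3.trans bot_le)
    -- Step 4 : the projection onto the component J i₀
    have hcomplG : IsCompl ((J i₀ : LieSubalgebra F S)).toSubmodule T.toSubmodule := by
      rw [LieIdeal.toLieSubalgebra_toSubmodule]
      constructor
      · rw [disjoint_iff, ← LieSubmodule.inf_toSubmodule, hGT_bot,
          LieSubmodule.bot_toSubmodule]
      · rw [codisjoint_iff, ← LieSubmodule.sup_toSubmodule, hGT_top,
          LieSubmodule.top_toSubmodule]
    set π : S →ₗ⁅F⁆ (J i₀ : LieSubalgebra F S) := projLieHom _ T hcomplG with hπ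
    have hπ0 : ∀ u : S, π u = 0 ↔ u ∈ T := fun u =>
      Submodule.linearProjOfIsCompl_apply_eq_zero_iff hcomplG
    set φ : N →ₗ⁅F⁆ (J i₀ : LieSubalgebra F S) := π.comp (p.comp N.incl) with hφ
    have hφ_apply : ∀ x : N, φ x = π (p ↑x) := fun _ => rfl
    have hkerφ : φ.ker = LieIdeal.comap N.incl D := by
      ext x
      rw [LieHom.mem_ker, LieIdeal.mem_comap]
      have hxC : (x : L) ∈ C := hNC x
      rw [hφ_apply x, hπ0]
      constructor
      · intro hmem
        have h2 : p ↑x ∈ E ⊓ T := by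
          rw [LieSubmodule.mem_inf]
          exact ⟨hCE _ hxC, hmem⟩
        rw [hET] at h2
        exact (hpE' _ hxC).mp h2
      · intro hmem
        have h2 : p ↑x ∈ E' := (hpE' _ hxC).mpr hmem
        exact hE'T h2
    have hrange : φ.range ≠ ⊤ := by
      intro htop
      have hCM : ∀ c ∈ C, c ∈ M := by
        intro c hc
        have hmem : π (p c) ∈ φ.range := by rw [htop]; exact LieSubalgebra.mem_top _
        rw [LieHom.mem_range] at hmem
        obtain ⟨x, hx⟩ := hmem
        have hcx : c - ↑x ∈ C := sub_mem hc (hNC x)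
        have h1 : p (c - ↑x) ∈ T := by
          rw [← hπ0]
          rw [map_sub, map_sub]
          rw [show π (p ↑x) = φ x from rfl, hx, sub_self]
        have h2 : p (c - ↑x) ∈ E := hCE _ hcx
        have h3 : p (c - ↑x) ∈ E' := by
          rw [← hET, LieSubmodule.mem_inf]; exact ⟨h2, h1⟩
        have h4 : c - ↑x ∈ D := (hpE' _ hcx).mp h3
        have h5 : c = (c - ↑x) + ↑x := by abel
        rw [h5]
        exact M.add_mem (hDM h4) (hNM x)
      apply hM.1
      have hle : C.toSubmodule ≤ M.toSubmodule := fun c hc => hCM c hc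
      have : M.toSubmodule = ⊤ := by
        rw [← hMC, sup_eq_left.mpr hle]
      rw [← LieSubalgebra.toSubmodule_inj, this, LieSubalgebra.top_toSubmodule]
    haveI hFDG : FiniteDimensional F ((J i₀ : LieSubalgebra F S)) := by
      haveI : FiniteDimensional F S := inferInstanceAs (FiniteDimensional F S.toSubmodule)
      exact inferInstanceAs (FiniteDimensional F ((J i₀ : LieSubalgebra F S)).toSubmodule)
    haveI hsolvrange : LieAlgebra.IsSolvable φ.range := by
      rcases hprop i₀ with hab2 | he
      · haveI : IsLieAbelian φ.range := hab2 φ.range hrange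
        exact LieAlgebra.ofAbelianIsSolvable _
      · obtain ⟨e⟩ := he
        have h3 : Module.finrank F ((J i₀ : LieSubalgebra F S)) ≤ 3 := by
          have he2 : Module.finrank F ((J i₀ : LieSubalgebra F S))
              = Module.finrank F (LieAlgebra.SpecialLinear.sl (Fin 2) F) :=
            e.toLinearEquiv.finrank_eq
          rw [finrank_sl2] at he2
          exact le_of_eq he2
        exact solvable_of_ne_top_of_finrank_le_three h3 φ.range hrange
    have h5 : LieAlgebra.IsSolvable (N ⧸ φ.ker) :=
      (LieAlgebra.solvable_iff_equiv_solvable φ.quotKerEquivRange).mpr hsolvrange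
    exact (congrArg (fun I : LieIdeal F N => LieAlgebra.IsSolvable (N ⧸ I)) hkerφ).mp h5
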